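/- arXiv:math-ph/0308040 — 3 statements merged into one kernel-verified Lean document; each statement's English description precedes it below -/
import Mathlib

section
/- For every real B > 0, every integer m ≥ 0 and every x ∈ ℝ with x ≠ 0, the regularization of the three-dimensional Coulomb potential by the Landau state γ_m^B satisfies ∫_{ℝ²} |γ_m^B(y,z)|² (x² + y² + z²)^{−1/2} dy dz = V_m^B(x), where V_m^B(x) = (1/m!) ∫₀^∞ u^m e^{−u} (x² + u/B)^{−1/2} du. -/
open MeasureTheory

/-- The Landau state `γ_m^B` as a function on `ℝ²`:
`γ_m^B(y,z) = (π m!)^{-1/2} B^{(m+1)/2} (y - iz)^m e^{-B(y²+z²)/2}`. -/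
noncomputable def landauState (B : ℝ) (m : ℕ) (p : ℝ × ℝ) : ℂ :=
  (((Real.pi * (m.factorial : ℝ)) ^ (-(1 : ℝ) / 2) * B ^ (((m : ℝ) + 1) / 2) : ℝ) : ℂ) *
    ((p.1 : ℂ) - Complex.I * (p.2 : ℂ)) ^ m *
    Complex.exp (((-(B * (p.1 ^ 2 + p.2 ^ 2)) / 2 : ℝ) : ℂ))

/-- The regularized Coulomb potential `V_m^B`. -/
noncomputable def VmB (B : ℝ) (m : ℕ) (x : ℝ) : ℝ :=
  (1 / (m.factorial : ℝ)) *
    ∫ u in Set.Ioi (0 : ℝ), u ^ m * Real.exp (-u) / Real.sqrt (x ^ 2 + u / B)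

/-- For `B > 0`, `m ≥ 0` and `x ≠ 0`, regularizing the Coulomb
potential with the Landau state `γ_m^B` gives `V_m^B(x)`. -/
theorem landau_regularization_eq_VmB (B : ℝ) (hB : 0 < B) (m : ℕ) (x : ℝ) (hx : x ≠ 0) :
    (∫ p : ℝ × ℝ,
        ‖landauState B m p‖ ^ 2 / Real.sqrt (x ^ 2 + p.1 ^ 2 + p.2 ^ 2))
      = VmB B m x := by
  have hπ : (0:ℝ) < Real.pi := Real.pi_pos
  have hfac : (0:ℝ) < (m.factorial : ℝ) := by exact_mod_cast m.factorial_pos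
  set C : ℝ := (Real.pi * (m.factorial : ℝ))⁻¹ * B ^ (m+1) with hC
  -- the squared absolute value of the Landau state
  have habs : ∀ p : ℝ × ℝ, ‖landauState B m p‖ ^ 2
      = C * (p.1^2+p.2^2)^m * Real.exp (-(B*(p.1^2+p.2^2))) := by
    intro p
    have h1 : ((Real.pi * (m.factorial : ℝ)) ^ (-(1:ℝ)/2))^2
        = (Real.pi * (m.factorial : ℝ))⁻¹ := by
      rw [← Real.rpow_natCast ((Real.pi * (m.factorial : ℝ)) ^ (-(1:ℝ)/2)) 2,
        ← Real.rpow_mul (mul_pos hπ hfac).le]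
      norm_num [Real.rpow_neg_one]
    have h2 : (B ^ (((m:ℝ)+1)/2))^2 = B^(m+1) := by
      rw [← Real.rpow_natCast (B ^ (((m:ℝ)+1)/2)) 2, ← Real.rpow_mul hB.le,
        Nat.cast_ofNat, div_mul_cancel₀ _ (two_ne_zero),
        show ((m:ℝ)+1) = ((m+1 : ℕ):ℝ) by push_cast; ring, Real.rpow_natCast]
    have h3 : ‖(p.1 : ℂ) - Complex.I * (p.2 : ℂ)‖ ^ 2 = p.1^2 + p.2^2 := by
      rw [Complex.sq_norm, Complex.normSq_apply]
      simp
      ring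
    have h4 : Real.exp (-(B*(p.1^2+p.2^2))/2)^2 = Real.exp (-(B*(p.1^2+p.2^2))) := by
      rw [sq, ← Real.exp_add, add_halves]
    rw [landauState, norm_mul, norm_mul, mul_pow, mul_pow, Complex.norm_real, Real.norm_eq_abs,
      sq_abs, mul_pow, h1, h2, norm_pow, ← pow_mul, mul_comm m 2, pow_mul, h3, Complex.norm_exp,
      Complex.ofReal_re, h4, hC]
  -- rewrite the integrand as a radial function
  set g : ℝ → ℝ := fun t => C * t^m * Real.exp (-(B*t)) / Real.sqrt (x^2 + t) with hg
  have hint : (∫ p : ℝ × ℝ,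
      ‖landauState B m p‖ ^ 2 / Real.sqrt (x ^ 2 + p.1 ^ 2 + p.2 ^ 2))
      = ∫ p : ℝ × ℝ, g (p.1^2 + p.2^2) := by
    congr 1; funext p
    rw [habs p, hg]
    simp only [add_assoc]
  rw [hint]
  -- polar coordinates
  rw [← integral_comp_polarCoord_symm (fun p : ℝ × ℝ => g (p.1^2 + p.2^2))]
  have hpolar : (∫ p in polarCoord.target,
        p.1 • g ((polarCoord.symm p).1^2 + (polarCoord.symm p).2^2))
      = ∫ p in polarCoord.target, p.1 * g (p.1^2) := by
    apply setIntegral_congr_fun polarCoord.open_target.measurableSet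
    intro p _
    dsimp only
    have : (polarCoord.symm p).1^2 + (polarCoord.symm p).2^2 = p.1^2 := by
      simp only [polarCoord_symm_apply]
      rw [mul_pow, mul_pow, ← mul_add, Real.cos_sq_add_sin_sq, mul_one]
    rw [this, smul_eq_mul]
  rw [hpolar]
  -- split the product integral; the angular part contributes 2π
  have htarget : polarCoord.target = Set.Ioi (0:ℝ) ×ˢ Set.Ioo (-Real.pi) Real.pi := rfl
  rw [htarget, Measure.volume_eq_prod, ← Measure.prod_restrict,
    integral_fun_fst (f := fun r : ℝ => r * g (r^2))]
  have hvol : (volume.restrict (Set.Ioo (-Real.pi) Real.pi)).real Set.univ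
      = 2 * Real.pi := by
    rw [measureReal_def, Measure.restrict_apply_univ, Real.volume_Ioo, ENNReal.toReal_ofReal (by linarith)]
    ring
  rw [hvol]
  -- substitution u = r²
  have hsub1 : (∫ r in Set.Ioi (0:ℝ), r * g (r^2))
      = (1/2) * ∫ t in Set.Ioi (0:ℝ), g t := by
    rw [← integral_comp_rpow_Ioi_of_pos (g := g) two_pos, ← integral_const_mul]
    apply setIntegral_congr_fun measurableSet_Ioi
    intro r hr
    dsimp only
    rw [smul_eq_mul, show (2:ℝ) - 1 = (1:ℝ) by norm_num, Real.rpow_one,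
      show r ^ (2:ℝ) = r ^ 2 from by
        rw [show (2:ℝ) = ((2:ℕ):ℝ) by norm_num, Real.rpow_natCast]]
    ring
  rw [smul_eq_mul, hsub1]
  -- substitution u = B t
  set h : ℝ → ℝ := fun u => u ^ m * Real.exp (-u) / Real.sqrt (x ^ 2 + u / B) with hh
  have hsub2 : (∫ t in Set.Ioi (0:ℝ), g t)
      = (C / B^m) * ∫ t in Set.Ioi (0:ℝ), h (B * t) := by
    rw [← integral_const_mul]
    apply setIntegral_congr_fun measurableSet_Ioi
    intro t _
    rw [hg, hh]
    dsimp only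
    rw [mul_div_cancel_left₀ t hB.ne', mul_pow, ← mul_div_assoc]
    have hBm : (B:ℝ)^m ≠ 0 := pow_ne_zero _ hB.ne'
    congr 1
    field_simp
  rw [hsub2, integral_comp_mul_left_Ioi h 0 hB, mul_zero, smul_eq_mul]
  rw [VmB]
  have hIeq : (∫ u in Set.Ioi (0:ℝ), u ^ m * Real.exp (-u) / Real.sqrt (x ^ 2 + u / B))
      = ∫ u in Set.Ioi (0:ℝ), h u := rfl
  rw [hIeq, hC, pow_succ]
  set I := ∫ u in Set.Ioi (0:ℝ), h u
  have hπ' : Real.pi ≠ 0 := hπ.ne'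
  have hf' : (m.factorial:ℝ) ≠ 0 := hfac.ne'
  have hB' : B ≠ 0 := hB.ne'
  have hBmne : (B:ℝ)^m ≠ 0 := pow_ne_zero _ hB'
  field_simp
end

section
/- For every integer m ≥ 0 and every x ∈ ℝ with x ≠ 0, one has V_{m+1}(x) < V_m(x) < 1/|x|. -/
open MeasureTheory

section Aux
open Set Real

lemma intOn_pow_exp (k : ℕ) :
    IntegrableOn (fun u : ℝ => u ^ k * Real.exp (-u)) (Set.Ioi 0) := by
  have h := Real.GammaIntegral_convergent (s := (k : ℝ) + 1) (by positivity)
  refine h.congr_fun (fun u hu => ?_) measurableSet_Ioi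
  rw [add_sub_cancel_right]
  beta_reduce
  rw [Real.rpow_natCast, mul_comm]

lemma integral_pow_exp (k : ℕ) :
    ∫ u in Set.Ioi (0:ℝ), u ^ k * Real.exp (-u) = k.factorial := by
  have h := Real.Gamma_eq_integral (s := (k : ℝ) + 1) (by positivity)
  rw [Real.Gamma_nat_eq_factorial] at h
  rw [h]
  refine setIntegral_congr_fun measurableSet_Ioi (fun u hu => ?_)
  rw [add_sub_cancel_right, Real.rpow_natCast, mul_comm]

lemma intOn_f (k : ℕ) (x : ℝ) (hx : x ≠ 0) :
    IntegrableOn (fun u : ℝ => u ^ k * Real.exp (-u) / Real.sqrt (x ^ 2 + u))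
      (Set.Ioi 0) := by
  refine ((intOn_pow_exp k).mul_const |x|⁻¹).mono ?_ ?_
  · apply Measurable.aestronglyMeasurable; fun_prop
  · filter_upwards [ae_restrict_mem measurableSet_Ioi] with u hu
    have hu0 : (0:ℝ) < u := hu
    have hs : |x| ≤ Real.sqrt (x ^ 2 + u) := by
      rw [← Real.sqrt_sq_eq_abs]
      exact Real.sqrt_le_sqrt (by linarith)
    have hxpos : (0:ℝ) < |x| := abs_pos.mpr hx
    have hspos : (0:ℝ) < Real.sqrt (x ^ 2 + u) := lt_of_lt_of_le hxpos hs
    have hnn : (0:ℝ) ≤ u ^ k * Real.exp (-u) := by positivity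
    rw [Real.norm_eq_abs, Real.norm_eq_abs, abs_div, abs_of_nonneg hnn,
      abs_of_pos hspos, abs_of_nonneg (by positivity : (0:ℝ) ≤ u ^ k * Real.exp (-u) * |x|⁻¹),
      div_eq_mul_inv]
    exact mul_le_mul_of_nonneg_left (inv_anti₀ hxpos hs) hnn

end Aux

/-- The regularized Coulomb potential
`V_m(x) = (1/m!) ∫₀^∞ u^m e^{−u} (x² + u)^{−1/2} du`. -/
noncomputable def Vm (m : ℕ) (x : ℝ) : ℝ :=
  (1 / (m.factorial : ℝ)) *
    ∫ u in Set.Ioi (0 : ℝ), u ^ m * Real.exp (-u) / Real.sqrt (x ^ 2 + u)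

/-- For every `m ≥ 0` and `x ≠ 0`: `V_{m+1}(x) < V_m(x) < 1/|x|`. -/
theorem Vm_succ_lt_Vm_lt_inv_abs (m : ℕ) (x : ℝ) (hx : x ≠ 0) :
    Vm (m + 1) x < Vm m x ∧ Vm m x < 1 / |x| := by
  open Set Real in
  have hx2 : (0:ℝ) < x ^ 2 := by positivity
  have hxpos : (0:ℝ) < |x| := abs_pos.mpr hx
  set f : ℕ → ℝ → ℝ := fun k u => u ^ k * Real.exp (-u) / Real.sqrt (x ^ 2 + u) with hf
  have hfac : ∀ k : ℕ, (0:ℝ) < k.factorial := fun k => by positivity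
  -- basic facts about sqrt
  have hsq_pos : ∀ u : ℝ, 0 ≤ u → 0 < Real.sqrt (x ^ 2 + u) := fun u hu =>
    Real.sqrt_pos.mpr (by linarith)
  constructor
  · -- V_{m+1} < V_m
    set c : ℝ := (Real.sqrt (x ^ 2 + (m + 1)))⁻¹ with hc
    have hcpos : 0 < c := inv_pos.mpr (hsq_pos _ (by positivity))
    set φ : ℝ → ℝ := fun u =>
      (m + 1 : ℝ) * f m u - f (m + 1) u
        - c * ((m + 1 : ℝ) * (u ^ m * Real.exp (-u))) + c * (u ^ (m + 1) * Real.exp (-u))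
      with hφ
    have hφ_eq : ∀ u : ℝ, φ u =
        u ^ m * Real.exp (-u) * (((m:ℝ) + 1) - u)
          * ((Real.sqrt (x ^ 2 + u))⁻¹ - c) := by
      intro u
      simp only [hφ, hf, div_eq_mul_inv, pow_succ]
      push_cast
      ring
    -- integrability of φ
    have hint : IntegrableOn φ (Set.Ioi 0) := by
      have h1 := (intOn_f m x hx).const_mul (m + 1 : ℝ)
      have h2 := intOn_f (m + 1) x hx
      have h3 := ((intOn_pow_exp m).const_mul (m + 1 : ℝ)).const_mul c
      have h4 := (intOn_pow_exp (m + 1)).const_mul c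
      exact ((h1.sub h2).sub h3).add h4
    -- positivity of ∫ φ
    have hφ_nonneg : ∀ u ∈ Set.Ioi (0:ℝ), 0 ≤ φ u := by
      intro u hu
      have hu0 : (0:ℝ) < u := hu
      rw [hφ_eq]
      have hb : (0:ℝ) ≤ u ^ m * Real.exp (-u) := by positivity
      rcases le_total u ((m:ℝ) + 1) with h | h
      · have hs : Real.sqrt (x ^ 2 + u) ≤ Real.sqrt (x ^ 2 + (m + 1)) :=
          Real.sqrt_le_sqrt (by push_cast; linarith)
        have : c ≤ (Real.sqrt (x ^ 2 + u))⁻¹ :=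
          inv_anti₀ (hsq_pos u hu0.le) (by push_cast at hs ⊢; linarith)
        have h1 : (0:ℝ) ≤ ((m:ℝ) + 1) - u := by linarith
        rw [mul_assoc]
        exact mul_nonneg hb (by nlinarith)
      · have hs : Real.sqrt (x ^ 2 + (m + 1)) ≤ Real.sqrt (x ^ 2 + u) :=
          Real.sqrt_le_sqrt (by push_cast; linarith)
        have h2 : (Real.sqrt (x ^ 2 + u))⁻¹ ≤ c :=
          inv_anti₀ (hsq_pos _ (by positivity)) (by push_cast at hs ⊢; linarith)
        rw [mul_assoc]
        refine mul_nonneg hb ?_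
        nlinarith
    have hφ_pos : ∀ u ∈ Set.Ioi (0:ℝ), u ≠ (m:ℝ) + 1 → 0 < φ u := by
      intro u hu hne
      have hu0 : (0:ℝ) < u := hu
      rw [hφ_eq]
      have hb : (0:ℝ) < u ^ m * Real.exp (-u) := by positivity
      rcases lt_or_gt_of_ne hne with h | h
      · have hs : Real.sqrt (x ^ 2 + u) < Real.sqrt (x ^ 2 + (m + 1)) :=
          Real.sqrt_lt_sqrt (by positivity) (by push_cast; linarith)
        have hlt : c < (Real.sqrt (x ^ 2 + u))⁻¹ := by
          apply inv_strictAnti₀ (hsq_pos u hu0.le)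
          push_cast at hs ⊢; linarith
        have h1 : (0:ℝ) < ((m:ℝ) + 1) - u := by linarith
        have h2 : (0:ℝ) < (Real.sqrt (x ^ 2 + u))⁻¹ - c := by linarith
        rw [mul_assoc]
        exact mul_pos hb (by nlinarith)
      · have hs : Real.sqrt (x ^ 2 + (m + 1)) < Real.sqrt (x ^ 2 + u) :=
          Real.sqrt_lt_sqrt (by positivity) (by push_cast; linarith)
        have hlt : (Real.sqrt (x ^ 2 + u))⁻¹ < c := by
          apply inv_strictAnti₀ (hsq_pos _ (by positivity))
          push_cast at hs ⊢; linarith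
        rw [mul_assoc]
        refine mul_pos hb ?_
        nlinarith
    have hpos : 0 < ∫ u in Set.Ioi (0:ℝ), φ u := by
      rw [setIntegral_pos_iff_support_of_nonneg_ae
        ((ae_restrict_iff' measurableSet_Ioi).2 (ae_of_all _ hφ_nonneg)) hint]
      have hsub : Set.Ioi (0:ℝ) \ {(m:ℝ) + 1} ⊆ Function.support φ ∩ Set.Ioi 0 := by
        rintro u ⟨hu, hne⟩
        exact ⟨ne_of_gt (hφ_pos u hu (by simpa using hne)), hu⟩
      calc (0:ENNReal) < volume (Set.Ioi (0:ℝ) \ {(m:ℝ) + 1}) := by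
            rw [measure_diff_null (measure_singleton _)]
            simp [Real.volume_Ioi]
        _ ≤ _ := measure_mono hsub
    -- compute ∫ φ = (m+1) I_m - I_{m+1}
    have hIφ : ∫ u in Set.Ioi (0:ℝ), φ u
        = (m + 1 : ℝ) * (∫ u in Set.Ioi (0:ℝ), f m u)
          - ∫ u in Set.Ioi (0:ℝ), f (m + 1) u := by
      have h1 : IntegrableOn (fun u : ℝ => (m + 1 : ℝ) * f m u) (Set.Ioi 0) :=
        (intOn_f m x hx).const_mul (m + 1 : ℝ)
      have h2 : IntegrableOn (fun u : ℝ => f (m + 1) u) (Set.Ioi 0) :=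
        intOn_f (m + 1) x hx
      have h3 : IntegrableOn (fun u : ℝ => c * ((m + 1 : ℝ) * (u ^ m * Real.exp (-u))))
          (Set.Ioi 0) := ((intOn_pow_exp m).const_mul (m + 1 : ℝ)).const_mul c
      have h4 : IntegrableOn (fun u : ℝ => c * (u ^ (m + 1) * Real.exp (-u)))
          (Set.Ioi 0) := (intOn_pow_exp (m + 1)).const_mul c
      simp only [hφ]
      have e1 := integral_add ((h1.sub h2).sub h3) h4
      simp only [Pi.sub_apply] at e1
      have e2 := integral_sub (h1.sub h2) h3
      simp only [Pi.sub_apply] at e2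
      rw [e1, e2, integral_sub h1 h2, integral_const_mul, integral_const_mul,
        integral_const_mul, integral_const_mul, integral_pow_exp, integral_pow_exp]
      have : c * ((m + 1 : ℝ) * (m.factorial : ℝ)) = c * ((m+1).factorial : ℝ) := by
        rw [Nat.factorial_succ]; push_cast; ring
      linarith [this]
    rw [hIφ] at hpos
    -- conclude
    simp only [Vm, ← hf]
    rw [div_mul_eq_mul_div, div_mul_eq_mul_div, one_mul, one_mul,
      div_lt_div_iff₀ (hfac (m+1)) (hfac m)]
    have hfs : ((m+1).factorial : ℝ) = (m + 1 : ℝ) * (m.factorial : ℝ) := by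
      rw [Nat.factorial_succ]; push_cast; ring
    rw [hfs]
    nlinarith [hfac m, hpos]
  · -- V_m < 1/|x|
    set ψ : ℝ → ℝ := fun u => u ^ m * Real.exp (-u) * |x|⁻¹ - f m u with hψ
    have hint : IntegrableOn ψ (Set.Ioi 0) :=
      ((intOn_pow_exp m).mul_const _).sub (intOn_f m x hx)
    have hψ_pos : ∀ u ∈ Set.Ioi (0:ℝ), 0 < ψ u := by
      intro u hu
      have hu0 : (0:ℝ) < u := hu
      have hs : |x| < Real.sqrt (x ^ 2 + u) := by
        rw [← Real.sqrt_sq_eq_abs]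
        exact Real.sqrt_lt_sqrt (by positivity) (by linarith)
      have hlt : (Real.sqrt (x ^ 2 + u))⁻¹ < |x|⁻¹ := inv_strictAnti₀ hxpos hs
      have hb : (0:ℝ) < u ^ m * Real.exp (-u) := by positivity
      have : f m u = u ^ m * Real.exp (-u) * (Real.sqrt (x ^ 2 + u))⁻¹ := by
        simp [hf, div_eq_mul_inv]
      simp only [hψ, this]
      nlinarith
    have hpos : 0 < ∫ u in Set.Ioi (0:ℝ), ψ u := by
      rw [setIntegral_pos_iff_support_of_nonneg_ae
        ((ae_restrict_iff' measurableSet_Ioi).2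
          (ae_of_all _ (fun u hu => (hψ_pos u hu).le))) hint]
      have hsub : Set.Ioi (0:ℝ) ⊆ Function.support ψ ∩ Set.Ioi 0 :=
        fun u hu => ⟨ne_of_gt (hψ_pos u hu), hu⟩
      calc (0:ENNReal) < volume (Set.Ioi (0:ℝ)) := by simp [Real.volume_Ioi]
        _ ≤ _ := measure_mono hsub
    have hIψ : ∫ u in Set.Ioi (0:ℝ), ψ u
        = (m.factorial : ℝ) * |x|⁻¹ - ∫ u in Set.Ioi (0:ℝ), f m u := by
      have h1 : IntegrableOn (fun u : ℝ => u ^ m * Real.exp (-u) * |x|⁻¹) (Set.Ioi 0) :=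
        (intOn_pow_exp m).mul_const _
      have h2 : IntegrableOn (fun u : ℝ => f m u) (Set.Ioi 0) := intOn_f m x hx
      simp only [hψ]
      rw [integral_sub h1 h2, integral_mul_const, integral_pow_exp]
    rw [hIψ] at hpos
    simp only [Vm, ← hf]
    rw [div_mul_eq_mul_div, one_mul, div_lt_div_iff₀ (hfac m) hxpos, one_mul]
    have : (∫ u in Set.Ioi (0:ℝ), f m u) < (m.factorial : ℝ) * |x|⁻¹ := by linarith
    calc (∫ u in Set.Ioi (0:ℝ), f m u) * |x| < (m.factorial : ℝ) * |x|⁻¹ * |x| :=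
          mul_lt_mul_of_pos_right this hxpos
      _ = (m.factorial : ℝ) := by field_simp
end

section
/- For every integer N ≥ 1 and every x ∈ ℝ, the average V_av(x) = (1/N) Σ_{j=0}^{N−1} V_j(x) satisfies V_av(x) ≤ 2 V_N(x). -/
open MeasureTheory

open Set Real in
private lemma integrable_pow_exp (p : ℝ) (hp : -1 < p) :
    IntegrableOn (fun u : ℝ => u ^ p * Real.exp (-u)) (Set.Ioi 0) := by
  have h := Real.GammaIntegral_convergent (s := p + 1) (by linarith)
  simpa [mul_comm, add_sub_cancel_right] using h

open Set Real in
private lemma integrable_g (m : ℕ) (x : ℝ) :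
    IntegrableOn (fun u : ℝ => u ^ m * Real.exp (-u) / Real.sqrt (x ^ 2 + u))
      (Set.Ioi 0) := by
  apply Integrable.mono' ((integrable_pow_exp ((m : ℝ) - 1/2) (by
    have : (0:ℝ) ≤ (m:ℝ) := Nat.cast_nonneg m
    linarith)))
  · apply ContinuousOn.aestronglyMeasurable ?_ measurableSet_Ioi
    apply ContinuousOn.div
    · exact Continuous.continuousOn (by continuity)
    · exact Continuous.continuousOn (by continuity)
    · intro u hu
      have hu' : (0:ℝ) < u := hu
      have : 0 < x ^ 2 + u := by positivity
      exact (Real.sqrt_pos.mpr this).ne'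
  · filter_upwards [ae_restrict_mem measurableSet_Ioi] with u hu
    have hu' : (0:ℝ) < u := hu
    have hx : 0 < x ^ 2 + u := by positivity
    have hnn : 0 ≤ u ^ m * Real.exp (-u) / Real.sqrt (x ^ 2 + u) := by positivity
    rw [Real.norm_of_nonneg hnn]
    have h1 : Real.sqrt u ≤ Real.sqrt (x ^ 2 + u) := by
      apply Real.sqrt_le_sqrt; nlinarith [sq_nonneg x]
    have h2 : u ^ m * Real.exp (-u) / Real.sqrt (x ^ 2 + u)
        ≤ u ^ m * Real.exp (-u) / Real.sqrt u :=
      div_le_div_of_nonneg_left (by positivity) (Real.sqrt_pos.mpr hu') h1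
    have h3 : u ^ m * Real.exp (-u) / Real.sqrt u
        = u ^ ((m:ℝ) - 1/2) * Real.exp (-u) := by
      rw [Real.sqrt_eq_rpow,
        show u ^ m = u ^ ((m:ℝ)) by rw [Real.rpow_natCast],
        Real.rpow_sub hu']
      ring
    linarith [h2, h3.le]

open Set Real in
private lemma gamma_shift (p : ℝ) (hp : 0 < p) :
    ∫ u in Set.Ioi (0:ℝ), u ^ p * Real.exp (-u)
      = p * ∫ u in Set.Ioi (0:ℝ), u ^ (p - 1) * Real.exp (-u) := by
  have h1 := Real.Gamma_eq_integral (by linarith : (0:ℝ) < p + 1)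
  have h2 := Real.Gamma_eq_integral hp
  have h3 := Real.Gamma_add_one hp.ne'
  rw [add_sub_cancel_right] at h1
  have e1 : ∫ u in Set.Ioi (0:ℝ), u ^ p * Real.exp (-u)
      = ∫ u in Set.Ioi (0:ℝ), Real.exp (-u) * u ^ p := by
    congr 1; ext u; ring
  have e2 : ∫ u in Set.Ioi (0:ℝ), u ^ (p-1) * Real.exp (-u)
      = ∫ u in Set.Ioi (0:ℝ), Real.exp (-u) * u ^ (p-1) := by
    congr 1; ext u; ring
  rw [e1, e2, ← h1, ← h2, h3]

open Set Real in
private lemma mono_h (x s t : ℝ) (hs : 0 < s) (hst : s ≤ t) :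
    Real.sqrt s / Real.sqrt (x ^ 2 + s) ≤ Real.sqrt t / Real.sqrt (x ^ 2 + t) := by
  have ht : 0 < t := hs.trans_le hst
  have h1 : 0 < x ^ 2 + s := by positivity
  have h2 : 0 < x ^ 2 + t := by positivity
  rw [div_le_div_iff₀ (Real.sqrt_pos.mpr h1) (Real.sqrt_pos.mpr h2),
    ← Real.sqrt_mul hs.le, ← Real.sqrt_mul ht.le]
  apply Real.sqrt_le_sqrt
  nlinarith [sq_nonneg x]

open Set Real in
private lemma key_int (N : ℕ) (x : ℝ) :
    (2 * (N:ℝ) + 1) * ∫ u in Set.Ioi (0:ℝ), u ^ N * Real.exp (-u) / Real.sqrt (x ^ 2 + u)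
      ≤ 2 * ∫ u in Set.Ioi (0:ℝ), u ^ (N+1) * Real.exp (-u) / Real.sqrt (x ^ 2 + u) := by
  have h0 := integrable_g N x
  have h1 := integrable_g (N+1) x
  set c : ℝ := Real.sqrt ((N:ℝ) + 1/2) / Real.sqrt (x ^ 2 + ((N:ℝ) + 1/2)) with hc
  set p : ℝ := (N:ℝ) - 1/2 with hp
  have hppos : -1 < p := by
    have : (0:ℝ) ≤ (N:ℝ) := Nat.cast_nonneg N
    simp only [hp]; linarith
  have hp1 : -1 < p + 1 := by linarith
  -- integrability of W u = 2 u^{p+1} e^{-u} - (2N+1) u^p e^{-u}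
  have hW : IntegrableOn (fun u : ℝ =>
      2 * (u ^ (p+1) * Real.exp (-u)) - (2*(N:ℝ)+1) * (u ^ p * Real.exp (-u)))
      (Set.Ioi 0) :=
    ((integrable_pow_exp (p+1) hp1).const_mul 2).sub
      ((integrable_pow_exp p hppos).const_mul _)
  have heq : ∀ u ∈ Set.Ioi (0:ℝ),
      2 * (u ^ (p+1) * Real.exp (-u)) - (2*(N:ℝ)+1) * (u ^ p * Real.exp (-u))
        = (2*u - (2*(N:ℝ)+1)) * (u ^ p * Real.exp (-u)) := by
    intro u hu
    have hu' : (0:ℝ) < u := hu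
    rw [Real.rpow_add hu' p 1, Real.rpow_one]
    ring
  have hL : IntegrableOn (fun u : ℝ =>
      c * ((2*u - (2*(N:ℝ)+1)) * (u ^ p * Real.exp (-u)))) (Set.Ioi 0) := by
    apply Integrable.const_mul
    apply hW.congr_fun heq measurableSet_Ioi
  -- value of the model integral is zero
  have hJ : ∫ u in Set.Ioi (0:ℝ), (2*u - (2*(N:ℝ)+1)) * (u ^ p * Real.exp (-u)) = 0 := by
    rw [← setIntegral_congr_fun measurableSet_Ioi heq]
    rw [integral_sub ((integrable_pow_exp (p+1) hp1).const_mul 2)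
      ((integrable_pow_exp p hppos).const_mul _), integral_const_mul, integral_const_mul]
    have := gamma_shift (p+1) (by linarith)
    rw [add_sub_cancel_right] at this
    rw [this]
    have : p + 1 = (N:ℝ) + 1/2 := by simp only [hp]; ring
    rw [this]; ring
  -- pointwise comparison
  have hpt : ∀ u ∈ Set.Ioi (0:ℝ),
      c * ((2*u - (2*(N:ℝ)+1)) * (u ^ p * Real.exp (-u)))
        ≤ 2 * (u ^ (N+1) * Real.exp (-u) / Real.sqrt (x ^ 2 + u))
          - (2*(N:ℝ)+1) * (u ^ N * Real.exp (-u) / Real.sqrt (x ^ 2 + u)) := by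
    intro u hu
    have hu' : (0:ℝ) < u := hu
    have hxu : 0 < x ^ 2 + u := by positivity
    have hid : u ^ p * Real.sqrt u = u ^ N := by
      rw [Real.sqrt_eq_rpow, ← Real.rpow_add hu',
        show p + 1/2 = (N:ℝ) by simp only [hp]; ring, Real.rpow_natCast]
    have hRHS : 2 * (u ^ (N+1) * Real.exp (-u) / Real.sqrt (x ^ 2 + u))
          - (2*(N:ℝ)+1) * (u ^ N * Real.exp (-u) / Real.sqrt (x ^ 2 + u))
        = (2*u - (2*(N:ℝ)+1)) * (u ^ p * Real.exp (-u))
            * (Real.sqrt u / Real.sqrt (x ^ 2 + u)) := by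
      have : (2*u - (2*(N:ℝ)+1)) * (u ^ p * Real.exp (-u))
            * (Real.sqrt u / Real.sqrt (x ^ 2 + u))
          = (2*u - (2*(N:ℝ)+1)) * ((u ^ p * Real.sqrt u) * Real.exp (-u))
            / Real.sqrt (x ^ 2 + u) := by ring
      rw [this, hid, pow_succ]
      ring
    rw [hRHS]
    set a : ℝ := 2*u - (2*(N:ℝ)+1) with ha
    have hA : (0:ℝ) ≤ u ^ p * Real.exp (-u) := by positivity
    rcases le_or_gt ((N:ℝ) + 1/2) u with h | h
    · have hm : c ≤ Real.sqrt u / Real.sqrt (x ^ 2 + u) :=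
        mono_h x ((N:ℝ)+1/2) u (by positivity) h
      have ha' : 0 ≤ a := by simp only [ha]; linarith
      calc c * (a * (u ^ p * Real.exp (-u)))
          ≤ (Real.sqrt u / Real.sqrt (x ^ 2 + u)) * (a * (u ^ p * Real.exp (-u))) := by
            apply mul_le_mul_of_nonneg_right hm (by positivity)
        _ = a * (u ^ p * Real.exp (-u)) * (Real.sqrt u / Real.sqrt (x ^ 2 + u)) := by ring
    · have hm : Real.sqrt u / Real.sqrt (x ^ 2 + u) ≤ c :=
        mono_h x u ((N:ℝ)+1/2) hu' h.le
      have ha' : a ≤ 0 := by simp only [ha]; linarith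
      have hAa : a * (u ^ p * Real.exp (-u)) ≤ 0 := mul_nonpos_of_nonpos_of_nonneg ha' hA
      calc c * (a * (u ^ p * Real.exp (-u)))
          ≤ (Real.sqrt u / Real.sqrt (x ^ 2 + u)) * (a * (u ^ p * Real.exp (-u))) := by
            exact mul_le_mul_of_nonpos_right hm hAa
        _ = a * (u ^ p * Real.exp (-u)) * (Real.sqrt u / Real.sqrt (x ^ 2 + u)) := by ring
  have hmono := setIntegral_mono_on hL
    ((h1.const_mul 2).sub (h0.const_mul (2*(N:ℝ)+1))) measurableSet_Ioi hpt
  have hcJ : ∫ u in Set.Ioi (0:ℝ),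
      c * ((2*u - (2*(N:ℝ)+1)) * (u ^ p * Real.exp (-u))) = 0 := by
    rw [integral_const_mul, hJ, mul_zero]
  have hI : ∫ u in Set.Ioi (0:ℝ),
      (2 * (u ^ (N+1) * Real.exp (-u) / Real.sqrt (x ^ 2 + u))
        - (2*(N:ℝ)+1) * (u ^ N * Real.exp (-u) / Real.sqrt (x ^ 2 + u)))
      = 2 * (∫ u in Set.Ioi (0:ℝ), u ^ (N+1) * Real.exp (-u) / Real.sqrt (x ^ 2 + u))
        - (2*(N:ℝ)+1) * ∫ u in Set.Ioi (0:ℝ), u ^ N * Real.exp (-u) / Real.sqrt (x ^ 2 + u) := by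
    rw [integral_sub (h1.const_mul 2) (h0.const_mul (2*(N:ℝ)+1)),
      integral_const_mul, integral_const_mul]
  rw [hcJ] at hmono
  simp only [Pi.sub_apply] at hmono
  rw [hI] at hmono
  linarith

private lemma step_Vm (N : ℕ) (x : ℝ) :
    (2*(N:ℝ)+1) * Vm N x ≤ (2*(N:ℝ)+2) * Vm (N+1) x := by
  have hk := key_int N x
  have hf : (0:ℝ) < N.factorial := by exact_mod_cast N.factorial_pos
  unfold Vm
  rw [Nat.factorial_succ]
  push_cast
  set I0 : ℝ := ∫ u in Set.Ioi (0:ℝ), u ^ N * Real.exp (-u) / Real.sqrt (x ^ 2 + u)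
  set I1 : ℝ := ∫ u in Set.Ioi (0:ℝ), u ^ (N+1) * Real.exp (-u) / Real.sqrt (x ^ 2 + u)
  have hN1 : (0:ℝ) < (N:ℝ) + 1 := by positivity
  have e1 : (2*(N:ℝ)+2) * (1 / (((N:ℝ)+1) * (N.factorial:ℝ)) * I1)
      = (1 / (N.factorial:ℝ)) * (2 * I1) := by
    field_simp
  rw [e1]
  have e2 : (2*(N:ℝ)+1) * (1 / (N.factorial:ℝ) * I0)
      = (1 / (N.factorial:ℝ)) * ((2*(N:ℝ)+1) * I0) := by ring
  rw [e2]
  apply mul_le_mul_of_nonneg_left hk (by positivity)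

private lemma sum_Vm_le (N : ℕ) (x : ℝ) :
    ∑ j ∈ Finset.range N, Vm j x ≤ 2 * (N:ℝ) * Vm N x := by
  induction N with
  | zero => simp
  | succ n ih =>
    rw [Finset.sum_range_succ]
    have h2 := step_Vm n x
    push_cast
    linarith

/-- For every `N ≥ 1` and every `x`, the average
`V_av(x) = (1/N) Σ_{j=0}^{N−1} V_j(x)` satisfies `V_av(x) ≤ 2 V_N(x)`. -/
theorem Vav_le_two_VN (N : ℕ) (hN : 1 ≤ N) (x : ℝ) :
    (1 / (N : ℝ)) * ∑ j ∈ Finset.range N, Vm j x ≤ 2 * Vm N x := by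
  have hNpos : (0:ℝ) < N := by exact_mod_cast hN
  have h := sum_Vm_le N x
  have := mul_le_mul_of_nonneg_left h (le_of_lt (by positivity : (0:ℝ) < 1 / (N:ℝ)))
  calc (1 / (N : ℝ)) * ∑ j ∈ Finset.range N, Vm j x
      ≤ (1 / (N : ℝ)) * (2 * (N:ℝ) * Vm N x) := this
    _ = 2 * Vm N x := by field_simp
end
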